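/- Let n be an odd squarefree positive integer and ε1, ε2 ∈ {−1,1} with ε1 ≠ ε2. Then the number of pairs (b,c) mod n with Jacobi symbol ((b^2+4c)/n) = ε1 and ((−c)/n) = ε2 is at most φ(n)^2/4. -/

import Mathlib

open Finset

namespace Stmt4Aux



/-- The Jacobi character mod `n` as a function on `ZMod n`. -/
def Jc (n : ℕ) (x : ZMod n) : ℤ := jacobiSym (x.val : ℤ) n

lemma Jc_intCast (n : ℕ) [NeZero n] (a : ℤ) : Jc n ((a : ZMod n)) = jacobiSym a n := by
  unfold Jc
  refine (jacobiSym.mod_left' ?_).symm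
  rw [ZMod.val_intCast, Int.emod_emod_of_dvd _ dvd_rfl]

lemma Jc_natCast (n : ℕ) [NeZero n] (a : ℕ) : Jc n ((a : ZMod n)) = jacobiSym a n := by
  have := Jc_intCast n (a : ℤ)
  rwa [Int.cast_natCast] at this

lemma cast_val_eq (n : ℕ) [NeZero n] (x : ZMod n) : ((x.val : ℤ) : ZMod n) = x := by
  rw [Int.cast_natCast]
  exact ZMod.natCast_rightInverse x

lemma Jc_mul (n : ℕ) [NeZero n] (x y : ZMod n) : Jc n (x * y) = Jc n x * Jc n y := by
  have hx : Jc n x = jacobiSym (x.val : ℤ) n := rfl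
  have h : Jc n (x * y) = jacobiSym ((x.val : ℤ) * (y.val : ℤ)) n := by
    have : ((x.val : ℤ) * (y.val : ℤ) : ℤ) = ((x.val * y.val : ℤ)) := by ring
    rw [← Jc_intCast n ((x.val : ℤ) * (y.val : ℤ))]
    congr 1
    push_cast
    simp [ZMod.natCast_val, ZMod.cast_id]
  rw [h, jacobiSym.mul_left]
  rfl

lemma Jc_unit_sq (n : ℕ) [NeZero n] (u : (ZMod n)ˣ) : Jc n (u : ZMod n) ^ 2 = 1 := by
  apply jacobiSym.sq_one
  exact (ZMod.val_coe_unit_coprime u)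

lemma Jc_unit_ne_zero (n : ℕ) [NeZero n] (u : (ZMod n)ˣ) : Jc n (u : ZMod n) ≠ 0 := by
  apply jacobiSym.ne_zero
  exact (ZMod.val_coe_unit_coprime u)



lemma Jc_prime (p : ℕ) [Fact p.Prime] (x : ZMod p) :
    Jc p x = quadraticChar (ZMod p) x := by
  have h := jacobiSym.legendreSym.to_jacobiSym p (x.val : ℤ)
  unfold Jc
  rw [← h]
  unfold legendreSym
  congr 1
  push_cast
  simp [ZMod.natCast_val, ZMod.cast_id]

section PrimeSums
variable (p : ℕ) [Fact p.Prime]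

lemma ringChar_ne_two (hp2 : p ≠ 2) : ringChar (ZMod p) ≠ 2 := by
  rw [ZMod.ringChar_zmod_n]; exact hp2

lemma quad_sq (x : ZMod p) :
    quadraticChar (ZMod p) x ^ 2 = if x = 0 then 0 else 1 := by
  by_cases h : x = 0
  · simp [h]
  · rw [if_neg h]; exact quadraticChar_sq_one h

lemma quad_cube (x : ZMod p) :
    quadraticChar (ZMod p) x ^ 3 = quadraticChar (ZMod p) x := by
  have h3 : quadraticChar (ZMod p) x ^ 3 = quadraticChar (ZMod p) x ^ 2 * quadraticChar (ZMod p) x := by ring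
  rw [h3, quad_sq]
  by_cases h : x = 0
  · simp [h]
  · simp [h]

lemma card_filter_eq_zero : (Finset.univ.filter fun x : ZMod p => x = 0).card = 1 := by
  simp [Finset.filter_eq']

lemma card_filter_ne_zero : (Finset.univ.filter fun x : ZMod p => ¬ x = 0).card = p - 1 := by
  rw [Finset.filter_not, Finset.card_sdiff_of_subset (Finset.filter_subset _ _)]
  simp [card_filter_eq_zero, ZMod.card p]

lemma sum_quad_sq : ∑ x : ZMod p, quadraticChar (ZMod p) x ^ 2 = (p : ℤ) - 1 := by
  simp only [quad_sq]
  rw [Finset.sum_ite, Finset.sum_const, Finset.sum_const, card_filter_ne_zero]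
  have hp1 : 1 ≤ p := (Fact.out : p.Prime).one_lt.le
  simp
  push_cast [hp1]
  ring

lemma sum_sq_add (hp2 : p ≠ 2) (a : ZMod p) :
    ∑ b : ZMod p, quadraticChar (ZMod p) (b ^ 2 + a) ^ 2
      = (p : ℤ) - 1 - quadraticChar (ZMod p) (-a) := by
  simp only [quad_sq]
  have hcard : ∀ b : ZMod p, (b ^ 2 + a = 0) ↔ (b ^ 2 = -a) := by
    intro b; constructor <;> intro h <;> linear_combination h
  simp only [hcard]
  rw [Finset.sum_ite, Finset.sum_const, Finset.sum_const]
  have hsqrts := quadraticChar_card_sqrts (ringChar_ne_two p hp2) (-a)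
  rw [Set.toFinset_setOf] at hsqrts
  have hsplit : (Finset.univ.filter fun b : ZMod p => ¬ b ^ 2 = -a).card
      = p - (Finset.univ.filter fun b : ZMod p => b ^ 2 = -a).card := by
    rw [Finset.filter_not, Finset.card_sdiff_of_subset (Finset.filter_subset _ _)]
    simp [ZMod.card p]
  rw [hsplit]
  have hle : (Finset.univ.filter fun b : ZMod p => b ^ 2 = -a).card ≤ p := by
    calc _ ≤ Finset.univ.card := Finset.card_filter_le _ _
    _ = p := by simp [ZMod.card p]
  rw [smul_zero, zero_add, nsmul_eq_mul, mul_one]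
  push_cast [hle]
  linarith [hsqrts]

lemma sum_shift (hp2 : p ≠ 2) {a : ZMod p} (ha : a ≠ 0) :
    ∑ c : ZMod p, quadraticChar (ZMod p) (c * (c + a)) = -1 := by
  classical
  have h0 : ∑ c : ZMod p, quadraticChar (ZMod p) (c * (c + a))
      = ∑ c ∈ Finset.univ.erase (0 : ZMod p), quadraticChar (ZMod p) (c * (c + a)) := by
    rw [← Finset.sum_erase_add _ _ (Finset.mem_univ (0 : ZMod p))]
    simp
  rw [h0]
  have h1 : ∑ c ∈ Finset.univ.erase (0 : ZMod p), quadraticChar (ZMod p) (c * (c + a))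
      = ∑ u ∈ Finset.univ.erase (1 : ZMod p), quadraticChar (ZMod p) u := by
    refine Finset.sum_nbij' (fun c => 1 + a * c⁻¹) (fun u => a * (u - 1)⁻¹) ?_ ?_ ?_ ?_ ?_
    · intro c hc
      rw [Finset.mem_erase] at hc ⊢
      refine ⟨?_, Finset.mem_univ _⟩
      intro h
      have h2 : a * c⁻¹ = 0 := by linear_combination h
      rcases mul_eq_zero.mp h2 with h3 | h3
      · exact ha h3
      · exact hc.1 (by simpa using congrArg (fun z => z⁻¹) h3)
    · intro u hu
      rw [Finset.mem_erase] at hu ⊢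
      refine ⟨?_, Finset.mem_univ _⟩
      exact mul_ne_zero ha (inv_ne_zero (sub_ne_zero.mpr hu.1))
    · intro c hc
      rw [Finset.mem_erase] at hc
      have hcc : c * c⁻¹ = 1 := mul_inv_cancel₀ hc.1
      show a * (1 + a * c⁻¹ - 1)⁻¹ = c
      have hstep : (1 + a * c⁻¹) - 1 = a * c⁻¹ := by ring
      rw [hstep, mul_inv_rev, inv_inv]
      field_simp
    · intro u hu
      rw [Finset.mem_erase] at hu
      have h1 : u - 1 ≠ 0 := sub_ne_zero.mpr hu.1
      show 1 + a * (a * (u - 1)⁻¹)⁻¹ = u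
      rw [mul_inv_rev, inv_inv]
      field_simp
      ring
    · intro c hc
      rw [Finset.mem_erase] at hc
      have hcc : c * c⁻¹ = 1 := mul_inv_cancel₀ hc.1
      have hval : c * (c + a) = c ^ 2 * (1 + a * c⁻¹) := by
        have : c ^ 2 * (1 + a * c⁻¹) = c ^ 2 + c * a * (c * c⁻¹) := by ring
        rw [this, hcc]; ring
      rw [hval, map_mul, quadraticChar_sq_one' hc.1, one_mul]
  rw [h1]
  have h2 : ∑ u ∈ Finset.univ.erase (1 : ZMod p), quadraticChar (ZMod p) u
      + quadraticChar (ZMod p) 1 = ∑ u : ZMod p, quadraticChar (ZMod p) u :=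
    Finset.sum_erase_add _ _ (Finset.mem_univ 1)
  rw [quadraticChar_sum_zero (ringChar_ne_two p hp2)] at h2
  simp only [map_one] at h2
  linarith

end PrimeSums


def SA (n : ℕ) [NeZero n] : ℤ := ∑ b : ZMod n, ∑ c : ZMod n, Jc n (b^2+4*c)^2 * Jc n (-c)^2
def SD (n : ℕ) [NeZero n] : ℤ := ∑ b : ZMod n, ∑ c : ZMod n, Jc n (b^2+4*c) * Jc n (-c)


section PrimeVals
variable (p : ℕ) [Fact p.Prime]

lemma two_ne_zero' (hp2 : p ≠ 2) : (2 : ZMod p) ≠ 0 := by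
  intro h
  have h2 : ((2 : ℕ) : ZMod p) = 0 := by exact_mod_cast h
  have := (ZMod.natCast_eq_zero_iff 2 p).mp h2
  exact hp2 ((Nat.prime_dvd_prime_iff_eq Fact.out Nat.prime_two).mp this)

lemma four_ne_zero' (hp2 : p ≠ 2) : (4 : ZMod p) ≠ 0 := by
  have : (4 : ZMod p) = 2 * 2 := by norm_num
  rw [this]
  exact mul_ne_zero (two_ne_zero' p hp2) (two_ne_zero' p hp2)

lemma quad_four (hp2 : p ≠ 2) : quadraticChar (ZMod p) 4 = 1 := by
  have : (4 : ZMod p) = 2 ^ 2 := by norm_num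
  rw [this]
  exact quadraticChar_sq_one' (two_ne_zero' p hp2)

lemma SA_prime (hp2 : p ≠ 2) : SA p = ((p : ℤ) - 1) ^ 2 := by
  unfold SA
  simp only [Jc_prime]
  rw [Finset.sum_comm]
  have hin : ∀ c : ZMod p, (∑ b : ZMod p, quadraticChar (ZMod p) (b^2+4*c)^2
      * quadraticChar (ZMod p) (-c)^2)
      = ((p:ℤ)-1-quadraticChar (ZMod p) (-c)) * quadraticChar (ZMod p) (-c)^2 := by
    intro c
    rw [← Finset.sum_mul, sum_sq_add p hp2 (4*c)]
    congr 2
    have h : -(4*c) = (4 : ZMod p) * (-c) := by ring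
    rw [h, map_mul, quad_four p hp2, one_mul]
  rw [Finset.sum_congr rfl (fun c _ => hin c)]
  have hneg : (∑ c : ZMod p, ((p:ℤ)-1-quadraticChar (ZMod p) (-c))
        * quadraticChar (ZMod p) (-c)^2)
      = ∑ c : ZMod p, ((p:ℤ)-1-quadraticChar (ZMod p) c) * quadraticChar (ZMod p) c^2 :=
    Fintype.sum_equiv (Equiv.neg _) _ _ (fun x => rfl)
  rw [hneg]
  have expand : ∀ x : ZMod p, ((p:ℤ)-1-quadraticChar (ZMod p) x) * quadraticChar (ZMod p) x^2
      = ((p:ℤ)-1) * quadraticChar (ZMod p) x^2 - quadraticChar (ZMod p) x^3 := fun x => by ring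
  simp only [expand]
  rw [Finset.sum_sub_distrib, ← Finset.mul_sum, sum_quad_sq]
  simp only [quad_cube]
  rw [quadraticChar_sum_zero (ringChar_ne_two p hp2)]
  ring

lemma SD_prime (hp2 : p ≠ 2) : SD p = 0 := by
  unfold SD
  simp only [Jc_prime]
  have h4 : (4 : ZMod p) * 4⁻¹ = 1 := mul_inv_cancel₀ (four_ne_zero' p hp2)
  have key : ∀ b c : ZMod p, quadraticChar (ZMod p) (b^2+4*c) * quadraticChar (ZMod p) (-c)
      = quadraticChar (ZMod p) (-4) * quadraticChar (ZMod p) (c * (c + 4⁻¹ * b^2)) := by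
    intro b c
    rw [← map_mul, ← map_mul]
    congr 1
    linear_combination (b^2*c) * h4
  simp only [key]
  have hsum : ∀ b : ZMod p, ∑ c : ZMod p,
      quadraticChar (ZMod p) (-4) * quadraticChar (ZMod p) (c * (c + 4⁻¹*b^2))
      = quadraticChar (ZMod p) (-4) * (if b = 0 then (p:ℤ)-1 else -1) := by
    intro b
    rw [← Finset.mul_sum]
    congr 1
    by_cases hb : b = 0
    · rw [if_pos hb]
      have : ∀ c : ZMod p, c * (c + 4⁻¹ * b^2) = c * c := by
        intro c; rw [hb]; ring
      simp only [this]
      have h2 : ∀ c : ZMod p, quadraticChar (ZMod p) (c * c) = quadraticChar (ZMod p) c ^ 2 := by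
        intro c; rw [map_mul]; ring
      simp only [h2]
      exact sum_quad_sq p
    · rw [if_neg hb]
      refine sum_shift p hp2 ?_
      refine mul_ne_zero (inv_ne_zero (four_ne_zero' p hp2)) (pow_ne_zero _ hb)
  rw [Finset.sum_congr rfl (fun b _ => hsum b), ← Finset.mul_sum]
  have : ∑ b : ZMod p, (if b = 0 then (p:ℤ)-1 else -1) = 0 := by
    rw [Finset.sum_ite, Finset.sum_const, Finset.sum_const, card_filter_eq_zero,
      card_filter_ne_zero]
    have hp1 : 1 ≤ p := (Fact.out : p.Prime).one_lt.le
    simp only [smul_eq_mul, nsmul_eq_mul]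
    omega
  rw [this, mul_zero]

end PrimeVals

def SB (n : ℕ) [NeZero n] : ℤ := ∑ b : ZMod n, ∑ c : ZMod n, Jc n (b^2+4*c) * Jc n (-c)^2
def SC (n : ℕ) [NeZero n] : ℤ := ∑ b : ZMod n, ∑ c : ZMod n, Jc n (b^2+4*c)^2 * Jc n (-c)



section BC
variable (n : ℕ) [NeZero n] (hodd : Odd n)

def unitEquiv (u : (ZMod n)ˣ) : ZMod n ≃ ZMod n where
  toFun x := ↑u * x
  invFun x := ↑u⁻¹ * x
  left_inv x := by simp [← mul_assoc]
  right_inv x := by simp [← mul_assoc]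

lemma Jc_neg_sq (x : ZMod n) : Jc n (-x) ^ 2 = Jc n x ^ 2 := by
  have h : (-x : ZMod n) = ((-1 : (ZMod n)ˣ) : ZMod n) * x := by simp
  rw [h, Jc_mul, mul_pow, Jc_unit_sq, one_mul]

lemma Jc_four (hodd : Odd n) (x : ZMod n) : Jc n (4 * x) = Jc n x := by
  have hco : Nat.Coprime 2 n := by
    exact Nat.coprime_two_left.mpr hodd
  set u2 : (ZMod n)ˣ := ZMod.unitOfCoprime 2 hco with hu2
  have hco2 : ((u2 : ZMod n)) = (2 : ZMod n) := by
    rw [hu2, ZMod.coe_unitOfCoprime]; push_cast; ring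
  have h4 : (4 : ZMod n) = (u2 : ZMod n) * (u2 : ZMod n) := by rw [hco2]; norm_num
  rw [h4, mul_assoc, Jc_mul, Jc_mul, ← mul_assoc, ← sq, Jc_unit_sq, one_mul]

def affEquiv (u4 : (ZMod n)ˣ) (hco4 : ((u4 : ZMod n)) = 4) (b : ZMod n) : ZMod n ≃ ZMod n where
  toFun c := -b^2 - 4*c
  invFun u := (u4⁻¹ : (ZMod n)ˣ) * (-b^2 - u)
  left_inv c := by
    show (u4⁻¹ : (ZMod n)ˣ) * (-b^2 - (-b^2 - 4*c)) = c
    have h : (-b^2 - (-b^2 - 4*c)) = (u4 : ZMod n) * c := by rw [hco4]; ring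
    rw [h, ← mul_assoc, u4.inv_mul, one_mul]
  right_inv u := by
    show -b^2 - 4*((u4⁻¹ : (ZMod n)ˣ) * (-b^2 - u)) = u
    have h : (4 : ZMod n) * ((u4⁻¹ : (ZMod n)ˣ) * (-b^2 - u)) = (-b^2 - u) := by
      rw [← hco4, ← mul_assoc, u4.mul_inv, one_mul]
    rw [h]; ring

lemma SB_eq_SC (hodd : Odd n) : SB n = SC n := by
  have hco : Nat.Coprime 2 n := Nat.coprime_two_left.mpr hodd
  set u2 : (ZMod n)ˣ := ZMod.unitOfCoprime 2 hco with hu2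
  have hco2 : ((u2 : ZMod n)) = (2 : ZMod n) := by
    rw [hu2, ZMod.coe_unitOfCoprime]; push_cast; ring
  set u4 : (ZMod n)ˣ := u2 * u2 with hu4
  have hco4 : ((u4 : ZMod n)) = (4 : ZMod n) := by
    rw [hu4, Units.val_mul, hco2]; norm_num
  have hB : SB n = ∑ b : ZMod n, ∑ u : ZMod n, Jc n (b^2+u) * Jc n u ^ 2 := by
    unfold SB
    refine Finset.sum_congr rfl (fun b _ => ?_)
    refine Fintype.sum_equiv (unitEquiv n u4) _ _ (fun c => ?_)
    have he : (unitEquiv n u4) c = 4 * c := by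
      show ((u4 : ZMod n)) * c = 4 * c
      rw [hco4]
    rw [he]
    have h1 : (b^2 + 4*c) = (b^2 + 4*c) := rfl
    have h2 : Jc n (-c) ^ 2 = Jc n (4*c) ^ 2 := by
      rw [Jc_neg_sq]
      have : Jc n (4 * c) = Jc n c := Jc_four n hodd c
      rw [this]
    rw [h2]
  have hC : SC n = ∑ b : ZMod n, ∑ u : ZMod n, Jc n (b^2+u) * Jc n u ^ 2 := by
    unfold SC
    refine Finset.sum_congr rfl (fun b _ => ?_)
    refine Fintype.sum_equiv (affEquiv n u4 hco4 b) _ _ (fun c => ?_)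
    have he : (affEquiv n u4 hco4 b) c = -b^2 - 4*c := rfl
    rw [he]
    have h1 : b^2 + (-b^2 - 4*c) = 4 * (-c) := by ring
    have h2 : (-b^2 - 4*c : ZMod n) = -(b^2 + 4*c) := by ring
    rw [h1, h2, Jc_four n hodd, Jc_neg_sq]
    ring
  rw [hB, hC]

end BC


section Mul
variable (m k : ℕ) [NeZero m] [NeZero k]

instance : NeZero (m * k) := ⟨mul_ne_zero (NeZero.ne m) (NeZero.ne k)⟩

lemma Jc_castHom (x : ZMod (m * k)) :
    Jc (m * k) x = Jc m (ZMod.castHom (dvd_mul_right m k) (ZMod m) x)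
      * Jc k (ZMod.castHom (dvd_mul_left k m) (ZMod k) x) := by
  have h1 : Jc (m * k) x = jacobiSym (x.val : ℤ) (m * k) := rfl
  rw [h1, jacobiSym.mul_right]
  congr 1
  · rw [show ((x.val : ℤ)) = ((x.val : ℕ) : ℤ) from rfl, ← Jc_natCast m x.val]
    congr 1
    rw [ZMod.castHom_apply, ZMod.natCast_val]
  · rw [show ((x.val : ℤ)) = ((x.val : ℕ) : ℤ) from rfl, ← Jc_natCast k x.val]
    congr 1
    rw [ZMod.castHom_apply, ZMod.natCast_val]

lemma prod_sum (F : ZMod m → ℤ) (G : ZMod k → ℤ) :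
    ∑ y : ZMod m × ZMod k, F y.1 * G y.2 = (∑ x : ZMod m, F x) * (∑ x : ZMod k, G x) := by
  rw [Fintype.sum_prod_type]
  exact (Finset.sum_mul_sum _ _ _ _).symm

lemma sum_split (hmk : m.Coprime k)
    (f : ZMod m → ZMod m → ℤ) (g : ZMod k → ZMod k → ℤ) :
    (∑ b : ZMod (m*k), ∑ c : ZMod (m*k),
      f (ZMod.castHom (dvd_mul_right m k) (ZMod m) b) (ZMod.castHom (dvd_mul_right m k) (ZMod m) c)
        * g (ZMod.castHom (dvd_mul_left k m) (ZMod k) b)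
            (ZMod.castHom (dvd_mul_left k m) (ZMod k) c))
    = (∑ b : ZMod m, ∑ c : ZMod m, f b c) * (∑ b : ZMod k, ∑ c : ZMod k, g b c) := by
  classical
  set e := ZMod.chineseRemainder hmk with he
  have h1 : ∀ x : ZMod (m*k), ZMod.castHom (dvd_mul_right m k) (ZMod m) x = (e x).1 := by
    intro x
    exact RingHom.congr_fun
      (RingHom.ext_zmod (ZMod.castHom _ _) ((RingHom.fst _ _).comp e.toRingHom)) x
  have h2 : ∀ x : ZMod (m*k), ZMod.castHom (dvd_mul_left k m) (ZMod k) x = (e x).2 := by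
    intro x
    exact RingHom.congr_fun
      (RingHom.ext_zmod (ZMod.castHom _ _) ((RingHom.snd _ _).comp e.toRingHom)) x
  have step1 : (∑ b : ZMod (m*k), ∑ c : ZMod (m*k),
      f (ZMod.castHom (dvd_mul_right m k) (ZMod m) b) (ZMod.castHom (dvd_mul_right m k) (ZMod m) c)
        * g (ZMod.castHom (dvd_mul_left k m) (ZMod k) b)
            (ZMod.castHom (dvd_mul_left k m) (ZMod k) c))
      = ∑ y : ZMod m × ZMod k, ∑ z : ZMod m × ZMod k, f y.1 z.1 * g y.2 z.2 := by
    refine Fintype.sum_equiv e.toEquiv _ _ (fun b => ?_)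
    refine Fintype.sum_equiv e.toEquiv _ _ (fun c => ?_)
    rw [h1 b, h1 c, h2 b, h2 c]
    rfl
  rw [step1]
  have step2 : ∀ y : ZMod m × ZMod k,
      (∑ z : ZMod m × ZMod k, f y.1 z.1 * g y.2 z.2)
      = (∑ z : ZMod m, f y.1 z) * (∑ z : ZMod k, g y.2 z) := fun y =>
    prod_sum m k (fun z => f y.1 z) (fun z => g y.2 z)
  rw [Finset.sum_congr rfl (fun y _ => step2 y)]
  exact prod_sum m k (fun y1 => ∑ z : ZMod m, f y1 z) (fun y2 => ∑ z : ZMod k, g y2 z)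

lemma SA_mul (hmk : m.Coprime k) : SA (m * k) = SA m * SA k := by
  unfold SA
  have key : ∀ b c : ZMod (m*k), Jc (m*k) (b^2+4*c)^2 * Jc (m*k) (-c)^2
      = (Jc m ((ZMod.castHom (dvd_mul_right m k) (ZMod m) b)^2
            + 4 * (ZMod.castHom (dvd_mul_right m k) (ZMod m) c))^2
          * Jc m (-(ZMod.castHom (dvd_mul_right m k) (ZMod m) c))^2)
        * (Jc k ((ZMod.castHom (dvd_mul_left k m) (ZMod k) b)^2
            + 4 * (ZMod.castHom (dvd_mul_left k m) (ZMod k) c))^2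
          * Jc k (-(ZMod.castHom (dvd_mul_left k m) (ZMod k) c))^2) := by
    intro b c
    rw [Jc_castHom m k (b^2+4*c), Jc_castHom m k (-c)]
    simp only [map_add, map_pow, map_mul, map_neg, map_ofNat]
    ring
  rw [Finset.sum_congr rfl (fun b _ => Finset.sum_congr rfl (fun c _ => key b c))]
  exact sum_split m k hmk (fun b c => Jc m (b^2+4*c)^2 * Jc m (-c)^2)
    (fun b c => Jc k (b^2+4*c)^2 * Jc k (-c)^2)

lemma SD_mul (hmk : m.Coprime k) : SD (m * k) = SD m * SD k := by
  unfold SD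
  have key : ∀ b c : ZMod (m*k), Jc (m*k) (b^2+4*c) * Jc (m*k) (-c)
      = (Jc m ((ZMod.castHom (dvd_mul_right m k) (ZMod m) b)^2
            + 4 * (ZMod.castHom (dvd_mul_right m k) (ZMod m) c))
          * Jc m (-(ZMod.castHom (dvd_mul_right m k) (ZMod m) c)))
        * (Jc k ((ZMod.castHom (dvd_mul_left k m) (ZMod k) b)^2
            + 4 * (ZMod.castHom (dvd_mul_left k m) (ZMod k) c))
          * Jc k (-(ZMod.castHom (dvd_mul_left k m) (ZMod k) c))) := by
    intro b c
    rw [Jc_castHom m k (b^2+4*c), Jc_castHom m k (-c)]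
    simp only [map_add, map_pow, map_mul, map_neg, map_ofNat]
    ring
  rw [Finset.sum_congr rfl (fun b _ => Finset.sum_congr rfl (fun c _ => key b c))]
  exact sum_split m k hmk (fun b c => Jc m (b^2+4*c) * Jc m (-c))
    (fun b c => Jc k (b^2+4*c) * Jc k (-c))

end Mul


lemma prime_ne_two_of_odd {p : ℕ} (hp : p.Prime) (h : Odd p) : p ≠ 2 := by
  rintro rfl
  exact (Nat.not_odd_iff_even.mpr even_two) h

lemma SA_congr (m n : ℕ) (h : m = n) (i : NeZero m) (j : NeZero n) :
    @SA m i = @SA n j := by subst h; exact congrArg (fun inst => @SA m inst) (Subsingleton.elim i j)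

lemma SD_congr (m n : ℕ) (h : m = n) (i : NeZero m) (j : NeZero n) :
    @SD m i = @SD n j := by subst h; exact congrArg (fun inst => @SD m inst) (Subsingleton.elim i j)

lemma SA_one : @SA 1 ⟨one_ne_zero⟩ = 1 := by
  have : ∀ x : ZMod 1, Jc 1 x = 1 := fun x => jacobiSym.one_right _
  simp [SA, this]

lemma SA_eq (n : ℕ) : ∀ (i : NeZero n), Odd n → Squarefree n →
    @SA n i = (n.totient : ℤ) ^ 2 := by
  induction n using Nat.recOnPosPrimePosCoprime with
  | prime_pow p e hp he =>
    intro i hodd hsf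
    have hp' : p.Prime := hp
    have he1 : e = 1 := by
      by_contra h
      have h2 : 2 ≤ e := by omega
      have : p * p ∣ p ^ e := by
        have : p ^ 2 ∣ p ^ e := pow_dvd_pow p h2
        simpa [sq] using this
      exact hp'.one_lt.ne' (Nat.isUnit_iff.mp (hsf p this))
    subst he1
    rw [pow_one] at hodd hsf
    haveI : Fact p.Prime := ⟨hp'⟩
    haveI ip : NeZero p := ⟨hp'.ne_zero⟩
    have hp2 : p ≠ 2 := prime_ne_two_of_odd hp' hodd
    have hc : @SA (p^1) i = @SA p ip := SA_congr _ _ (pow_one p) i ip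
    rw [hc, SA_prime p hp2, pow_one, Nat.totient_prime hp']
    rw [show (((p - 1 : ℕ)) : ℤ) = (p : ℤ) - 1 by
      have := hp'.one_lt.le; omega]
  | zero => intro i; exact absurd rfl i.1
  | one =>
    intro i hodd hsf
    rw [Nat.totient_one, SA_congr 1 1 rfl i ⟨one_ne_zero⟩, SA_one]
    norm_num
  | coprime a b ha hb hab iha ihb =>
    intro i hodd hsf
    haveI ia : NeZero a := ⟨by omega⟩
    haveI ib : NeZero b := ⟨by omega⟩
    have hoa : Odd a := (Nat.odd_mul.mp hodd).1
    have hob : Odd b := (Nat.odd_mul.mp hodd).2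
    have hsa : Squarefree a := hsf.squarefree_of_dvd (dvd_mul_right a b)
    have hsb : Squarefree b := hsf.squarefree_of_dvd (dvd_mul_left b a)
    have hm := SA_mul a b hab
    rw [iha ia hoa hsa, ihb ib hob hsb] at hm
    rw [Nat.totient_mul hab]
    push_cast
    rw [mul_pow]
    exact (SA_congr _ _ rfl i _).trans hm

lemma SD_eq (n : ℕ) (i : NeZero n) (hodd : Odd n) (hsf : Squarefree n) (h1 : 1 < n) :
    @SD n i = 0 := by
  obtain ⟨m, hm⟩ := n.minFac_dvd
  set p := n.minFac with hp
  have hpp : p.Prime := Nat.minFac_prime (by omega)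
  haveI : Fact p.Prime := ⟨hpp⟩
  have hm0 : m ≠ 0 := by rintro rfl; simp [hm] at h1
  haveI im : NeZero m := ⟨hm0⟩
  haveI ip : NeZero p := ⟨hpp.ne_zero⟩
  have hcop : p.Coprime m := by
    rw [Nat.Prime.coprime_iff_not_dvd hpp]
    intro hdvd
    obtain ⟨t, ht⟩ := hdvd
    have : p * p ∣ n := ⟨t, by rw [hm, ht]; ring⟩
    exact hpp.one_lt.ne' (Nat.isUnit_iff.mp (hsf p this))
  have hodd' : Odd (p * m) := by rw [← hm]; exact hodd
  have hpo : Odd p := (Nat.odd_mul.mp hodd').1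
  have hp2 : p ≠ 2 := prime_ne_two_of_odd hpp hpo
  have hmul := SD_mul p m hcop
  rw [SD_prime p hp2, zero_mul] at hmul
  exact (SD_congr _ _ hm i _).trans hmul




lemma Jc_trichotomy (n : ℕ) (x : ZMod n) : Jc n x = 0 ∨ Jc n x = 1 ∨ Jc n x = -1 :=
  jacobiSym.trichotomy _ _

lemma ind_eq (a b ε₁ ε₂ : ℤ) (ha : a = 0 ∨ a = 1 ∨ a = -1) (hb : b = 0 ∨ b = 1 ∨ b = -1)
    (h₁ : ε₁ = -1 ∨ ε₁ = 1) (h₂ : ε₂ = -1 ∨ ε₂ = 1) :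
    4 * (if a = ε₁ ∧ b = ε₂ then (1:ℤ) else 0)
      = a^2*b^2 + ε₁*(a*b^2) + ε₂*(a^2*b) + ε₁*ε₂*(a*b) := by
  rcases h₁ with rfl|rfl <;> rcases h₂ with rfl|rfl <;>
    rcases ha with rfl|rfl|rfl <;> rcases hb with rfl|rfl|rfl <;> norm_num

section Bridge
variable (n : ℕ) [NeZero n] (ε₁ ε₂ : ℤ)

lemma card_bridge :
    (((Finset.range n ×ˢ Finset.range n).filter
      (fun bc => jacobiSym ((bc.1 : ℤ) ^ 2 + 4 * bc.2) n = ε₁ ∧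
        jacobiSym (-(bc.2 : ℤ)) n = ε₂)).card : ℤ)
    = ∑ b : ZMod n, ∑ c : ZMod n,
        (if Jc n (b^2+4*c) = ε₁ ∧ Jc n (-c) = ε₂ then (1:ℤ) else 0) := by
  classical
  rw [← Finset.sum_boole]
  have main : (∑ bc ∈ Finset.range n ×ˢ Finset.range n,
      (if jacobiSym ((bc.1 : ℤ) ^ 2 + 4 * bc.2) n = ε₁ ∧ jacobiSym (-(bc.2 : ℤ)) n = ε₂
        then (1:ℤ) else 0))
      = ∑ xy : ZMod n × ZMod n,
        (if Jc n (xy.1^2+4*xy.2) = ε₁ ∧ Jc n (-xy.2) = ε₂ then (1:ℤ) else 0) := by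
    refine Finset.sum_nbij' (fun bc => ((bc.1 : ZMod n), (bc.2 : ZMod n)))
      (fun xy => (xy.1.val, xy.2.val)) ?_ ?_ ?_ ?_ ?_
    · intro a ha; exact Finset.mem_univ _
    · intro xy _
      rw [Finset.mem_product]
      constructor <;> rw [Finset.mem_range] <;> exact ZMod.val_lt _
    · intro bc hbc
      rw [Finset.mem_product, Finset.mem_range, Finset.mem_range] at hbc
      ext
      · simp [ZMod.val_natCast_of_lt hbc.1]
      · simp [ZMod.val_natCast_of_lt hbc.2]
    · intro xy _
      ext
      · simp [ZMod.natCast_val, ZMod.cast_id]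
      · simp [ZMod.natCast_val, ZMod.cast_id]
    · intro bc hbc
      have h1 : jacobiSym ((bc.1 : ℤ) ^ 2 + 4 * bc.2) n
          = Jc n ((bc.1 : ZMod n)^2 + 4*(bc.2 : ZMod n)) := by
        rw [← Jc_intCast n ((bc.1 : ℤ) ^ 2 + 4 * bc.2)]
        congr 1
        push_cast
        ring
      have h2 : jacobiSym (-(bc.2 : ℤ)) n = Jc n (-(bc.2 : ZMod n)) := by
        rw [← Jc_intCast n (-(bc.2 : ℤ))]
        congr 1
        push_cast
        ring
      simp only [h1, h2]
  rw [main]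
  exact Fintype.sum_prod_type _

lemma four_card :
    (h₁ : ε₁ = -1 ∨ ε₁ = 1) → (h₂ : ε₂ = -1 ∨ ε₂ = 1) →
    4 * (((Finset.range n ×ˢ Finset.range n).filter
      (fun bc => jacobiSym ((bc.1 : ℤ) ^ 2 + 4 * bc.2) n = ε₁ ∧
        jacobiSym (-(bc.2 : ℤ)) n = ε₂)).card : ℤ)
    = SA n + ε₁ * SB n + ε₂ * SC n + ε₁ * ε₂ * SD n := by
  intro h₁ h₂
  rw [card_bridge n ε₁ ε₂, Finset.mul_sum]
  have step : ∀ b : ZMod n, (4 * ∑ c : ZMod n,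
      (if Jc n (b^2+4*c) = ε₁ ∧ Jc n (-c) = ε₂ then (1:ℤ) else 0))
      = ∑ c : ZMod n, (Jc n (b^2+4*c)^2 * Jc n (-c)^2
        + ε₁ * (Jc n (b^2+4*c) * Jc n (-c)^2)
        + ε₂ * (Jc n (b^2+4*c)^2 * Jc n (-c))
        + ε₁ * ε₂ * (Jc n (b^2+4*c) * Jc n (-c))) := by
    intro b
    rw [Finset.mul_sum]
    refine Finset.sum_congr rfl (fun c _ => ?_)
    exact ind_eq _ _ _ _ (Jc_trichotomy n _) (Jc_trichotomy n _) h₁ h₂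
  rw [Finset.sum_congr rfl (fun b _ => step b)]
  unfold SA SB SC SD
  simp only [Finset.sum_add_distrib, ← Finset.mul_sum]

end Bridge

end Stmt4Aux

theorem stmt_4 (n : ℕ) (hodd : Odd n) (hsf : Squarefree n) (ε₁ ε₂ : ℤ)
    (h₁ : ε₁ = -1 ∨ ε₁ = 1) (h₂ : ε₂ = -1 ∨ ε₂ = 1) (hne : ε₁ ≠ ε₂) :
    ((Finset.range n ×ˢ Finset.range n).filter
      (fun bc => jacobiSym ((bc.1 : ℤ) ^ 2 + 4 * bc.2) n = ε₁ ∧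
        jacobiSym (-(bc.2 : ℤ)) n = ε₂)).card ≤ n.totient ^ 2 / 4 := by
  have hn0 : n ≠ 0 := by rintro rfl; simp at hodd
  haveI inst : NeZero n := ⟨hn0⟩
  by_cases hn1 : n = 1
  · subst hn1
    have hz : ((Finset.range 1 ×ˢ Finset.range 1).filter
      (fun bc => jacobiSym ((bc.1 : ℤ) ^ 2 + 4 * bc.2) 1 = ε₁ ∧
        jacobiSym (-(bc.2 : ℤ)) 1 = ε₂)).card = 0 := by
      apply Finset.card_eq_zero.mpr
      rw [Finset.filter_eq_empty_iff]
      intro bc _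
      rw [jacobiSym.one_right, jacobiSym.one_right]
      rintro ⟨he1, he2⟩
      exact hne (he1 ▸ he2 ▸ rfl)
    rw [hz]
    exact Nat.zero_le _
  · have h1n : 1 < n := by omega
    have hε : ε₂ = -ε₁ := by
      rcases h₁ with rfl|rfl <;> rcases h₂ with rfl|rfl <;> simp_all
    have h4 := Stmt4Aux.four_card n ε₁ ε₂ h₁ h₂
    rw [Stmt4Aux.SA_eq n inst hodd hsf, Stmt4Aux.SD_eq n inst hodd hsf h1n,
      Stmt4Aux.SB_eq_SC n hodd, hε] at h4
    have key : 4 * ((((Finset.range n ×ˢ Finset.range n).filter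
      (fun bc => jacobiSym ((bc.1 : ℤ) ^ 2 + 4 * bc.2) n = ε₁ ∧
        jacobiSym (-(bc.2 : ℤ)) n = ε₂)).card : ℤ)) = ((n.totient : ℤ)) ^ 2 := by
      rw [hε]; linear_combination h4
    have key2 : 4 * (((Finset.range n ×ˢ Finset.range n).filter
      (fun bc => jacobiSym ((bc.1 : ℤ) ^ 2 + 4 * bc.2) n = ε₁ ∧
        jacobiSym (-(bc.2 : ℤ)) n = ε₂)).card) = n.totient ^ 2 := by
      exact_mod_cast key
    omega
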